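/- (Hilbert-space analogue of the convergence rate in Theorem 3.) Let E be a real inner product space, let f : E → ℝ be μ-strongly convex (μ > 0) and differentiable with gradient ∇f, and let x* be a minimizer of f on E. Let x : ℝ → E be a curve satisfying the gradient flow x'(t) = −∇f(x(t)) for all t ≥ 0 (i.e. x has derivative −∇f(x(t)) at each t ≥ 0). Then for all t ≥ 0, f(x(t)) − f(x*) ≤ exp(−2μt)·( f(x(0)) − f(x*) ). -/

import Mathlib

open Real Filter Topology

/-- First-order condition for strong convexity. -/
lemma strong_convex_first_order {E : Type*} [NormedAddCommGroup E]
    [InnerProductSpace ℝ E]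
    (f : E → ℝ) (f' : E → E) (μ : ℝ)
    (hconv : ∀ y z : E, ∀ t : ℝ, 0 ≤ t → t ≤ 1 →
      f (t • y + (1 - t) • z) ≤
        t * f y + (1 - t) * f z - μ / 2 * (t * (1 - t) * ‖y - z‖ ^ 2))
    (hdiff : ∀ x : E, HasFDerivAt f (innerSL ℝ (f' x)) x)
    (y z : E) :
    inner ℝ (f' z) (y - z) + μ / 2 * ‖y - z‖ ^ 2 ≤ f y - f z := by
  set c : ℝ → E := fun t => z + t • (y - z) with hc
  have hcder : HasDerivAt c (y - z) 0 := by
    have : HasDerivAt (fun t : ℝ => t • (y - z)) ((1 : ℝ) • (y - z)) 0 :=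
      (hasDerivAt_id 0).smul_const (y - z)
    have h2 := this.const_add z
    rw [one_smul] at h2
    exact h2
  have hφ : HasDerivAt (fun t => f (c t)) (inner ℝ (f' z) (y - z)) 0 := by
    have := (hdiff (c 0)).comp_hasDerivAt 0 hcder
    simpa [hc, innerSL_apply_apply, Function.comp_def] using this
  have hslope := hasDerivAt_iff_tendsto_slope.mp hφ
  have hslope' : Tendsto (slope (fun t => f (c t)) 0) (𝓝[>] (0:ℝ))
      (𝓝 (inner ℝ (f' z) (y - z))) :=
    hslope.mono_left (nhdsWithin_mono _ (fun t ht => ne_of_gt ht))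
  have hbound : ∀ᶠ t in 𝓝[>] (0:ℝ),
      slope (fun t => f (c t)) 0 t ≤ f y - f z - μ / 2 * ((1 - t) * ‖y - z‖ ^ 2) := by
    filter_upwards [Ioo_mem_nhdsGT_of_mem (by norm_num : (0:ℝ) ∈ Set.Ico 0 1)]
      with t ht
    have ht0 : 0 < t := ht.1
    have ht1 : t ≤ 1 := le_of_lt ht.2
    have hct : c t = t • y + (1 - t) • z := by
      simp [hc, smul_sub, sub_smul]; abel
    have hcv := hconv y z t ht0.le ht1
    rw [← hct] at hcv
    have hslope_eq : slope (fun t => f (c t)) 0 t = (f (c t) - f (c 0)) / t := by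
      simp [slope_def_field]
    rw [hslope_eq, div_le_iff₀ ht0]
    have hc0 : c 0 = z := by simp [hc]
    rw [hc0]
    nlinarith [hcv]
  have hlim2 : Tendsto (fun t : ℝ => f y - f z - μ / 2 * ((1 - t) * ‖y - z‖ ^ 2))
      (𝓝[>] (0:ℝ)) (𝓝 (f y - f z - μ / 2 * ((1 - 0) * ‖y - z‖ ^ 2))) := by
    have hcont : Continuous fun t : ℝ => f y - f z - μ / 2 * ((1 - t) * ‖y - z‖ ^ 2) := by
      fun_prop
    exact (hcont.tendsto 0).mono_left nhdsWithin_le_nhds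
  have hfin := le_of_tendsto_of_tendsto hslope' hlim2 hbound
  simp only [sub_zero] at hfin
  linarith [hfin]

theorem gradient_flow_exponential_convergence {E : Type*} [NormedAddCommGroup E]
    [InnerProductSpace ℝ E]
    (f : E → ℝ) (f' : E → E) (μ : ℝ) (hμ : 0 < μ)
    (hconv : ∀ y z : E, ∀ t : ℝ, 0 ≤ t → t ≤ 1 →
      f (t • y + (1 - t) • z) ≤
        t * f y + (1 - t) * f z - μ / 2 * (t * (1 - t) * ‖y - z‖ ^ 2))
    (hdiff : ∀ x : E, HasFDerivAt f (innerSL ℝ (f' x)) x)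
    (xstar : E) (hmin : ∀ y : E, f xstar ≤ f y)
    (x : ℝ → E) (hflow : ∀ t : ℝ, 0 ≤ t → HasDerivAt x (-(f' (x t))) t) :
    ∀ t : ℝ, 0 ≤ t →
      f (x t) - f xstar ≤ Real.exp (-2 * μ * t) * (f (x 0) - f xstar) := by
  -- PL inequality
  have hPL : ∀ z : E, f z - f xstar ≤ ‖f' z‖ ^ 2 / (2 * μ) := by
    intro z
    have h1 := strong_convex_first_order f f' μ hconv hdiff xstar z
    have hcs : -(‖f' z‖ * ‖xstar - z‖) ≤ inner ℝ (f' z) (xstar - z) :=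
      neg_abs_le _ |>.trans' (neg_le_neg (abs_real_inner_le_norm _ _))
    rw [le_div_iff₀ (by positivity : (0:ℝ) < 2 * μ)]
    nlinarith [h1, hcs, sq_nonneg (‖f' z‖ - μ * ‖xstar - z‖), hμ]
  set g : ℝ → ℝ := fun t => Real.exp (2 * μ * t) * (f (x t) - f xstar) with hg
  have hgder : ∀ t : ℝ, 0 ≤ t → HasDerivAt g
      (Real.exp (2 * μ * t) * (2 * μ * (f (x t) - f xstar) - ‖f' (x t)‖ ^ 2)) t := by
    intro t ht
    have he : HasDerivAt (fun t : ℝ => Real.exp (2 * μ * t))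
        (Real.exp (2 * μ * t) * (2 * μ)) t := by
      have : HasDerivAt (fun t : ℝ => 2 * μ * t) (2 * μ) t := by
        simpa using (hasDerivAt_id t).const_mul (2 * μ)
      simpa using this.exp
    have hfx : HasDerivAt (fun t => f (x t)) (-‖f' (x t)‖ ^ 2) t := by
      have := (hdiff (x t)).comp_hasDerivAt t (hflow t ht)
      simpa [innerSL_apply_apply, inner_neg_right, real_inner_self_eq_norm_sq, Function.comp_def] using this
    have hfx' : HasDerivAt (fun t => f (x t) - f xstar) (-‖f' (x t)‖ ^ 2) t :=
      hfx.sub_const _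
    have := he.mul hfx'
    refine this.congr_deriv ?_
    ring
  have hanti : AntitoneOn g (Set.Ici 0) := by
    apply antitoneOn_of_deriv_nonpos (convex_Ici 0)
    · exact fun t ht => ((hgder t ht).continuousAt).continuousWithinAt
    · intro t ht
      rw [interior_Ici] at ht
      exact ((hgder t (le_of_lt ht)).differentiableAt).differentiableWithinAt
    · intro t ht
      rw [interior_Ici] at ht
      rw [(hgder t (le_of_lt ht)).deriv]
      have hpl := (le_div_iff₀ (by positivity : (0:ℝ) < 2 * μ)).mp (hPL (x t))
      have h2 : 2 * μ * (f (x t) - f xstar) - ‖f' (x t)‖ ^ 2 ≤ 0 := by nlinarith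
      exact mul_nonpos_of_nonneg_of_nonpos (Real.exp_pos _).le h2
  intro t ht
  have h := hanti Set.self_mem_Ici ht ht
  simp only [hg, mul_zero, Real.exp_zero, one_mul] at h
  have key : f (x t) - f xstar =
      Real.exp (-2 * μ * t) * (Real.exp (2 * μ * t) * (f (x t) - f xstar)) := by
    rw [← mul_assoc, ← Real.exp_add]
    norm_num
  rw [key]
  exact mul_le_mul_of_nonneg_left h (Real.exp_pos _).le
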